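/- Let n ≥ 2k ≥ 4, 4 ≤ b ≤ k+1, let A = F([2,b]) ∪ F({1,b}) ⊆ C([n],k), let S = {S ∈ C([n],k) : 1 ∈ S} be the star family, and let X ⊆ [2,b] with |X| = d ≥ 1. Then |A(X)| = |S(X)| + C(n−b, k−b+1), where A(X) = {A ∈ A : A ∩ X ≠ ∅} and S(X) = {S ∈ S : S ∩ X ≠ ∅}. -/

import Mathlib

/-- The `i`-th smallest element (0-indexed) of a finite set of naturals. -/
def nth (A : Finset ℕ) (i : ℕ) : ℕ := (Finset.sort A (· ≤ ·)).getD i 0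


lemma nth_mem {S : Finset ℕ} {j : ℕ} (h : j < S.card) : nth S j ∈ S := by
  have hl : j < (Finset.sort S (· ≤ ·)).length := by rwa [Finset.length_sort]
  rw [nth, List.getD_eq_getElem _ 0 hl]
  exact (Finset.mem_sort _).1 (List.getElem_mem _)

lemma nth_lt_nth {S : Finset ℕ} {i j : ℕ} (hij : i < j) (h : j < S.card) :
    nth S i < nth S j := by
  have hl : j < (Finset.sort S (· ≤ ·)).length := by rwa [Finset.length_sort]
  have hi : i < (Finset.sort S (· ≤ ·)).length := lt_trans hij hl
  rw [nth, nth, List.getD_eq_getElem _ 0 hl, List.getD_eq_getElem _ 0 hi]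
  exact (Finset.sortedLT_sort S).getElem_lt_getElem_iff.2 hij

lemma nth_le_nth {S : Finset ℕ} {i j : ℕ} (hij : i ≤ j) (h : j < S.card) :
    nth S i ≤ nth S j := by
  rcases eq_or_lt_of_le hij with rfl | h'
  · exact le_refl _
  · exact le_of_lt (nth_lt_nth h' h)

lemma exists_nth {S : Finset ℕ} {x : ℕ} (hx : x ∈ S) : ∃ i < S.card, nth S i = x := by
  have : x ∈ Finset.sort S (· ≤ ·) := (Finset.mem_sort _).2 hx
  obtain ⟨⟨i, hi⟩, hix⟩ := List.mem_iff_get.1 this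
  refine ⟨i, by rwa [Finset.length_sort] at hi, ?_⟩
  rw [nth, List.getD_eq_getElem _ 0 hi]; exact hix

lemma nth_ge {S : Finset ℕ} {c : ℕ} (hc : ∀ x ∈ S, c ≤ x) :
    ∀ j, j < S.card → c + j ≤ nth S j := by
  intro j
  induction j with
  | zero => intro h; simpa using hc _ (nth_mem h)
  | succ m ih =>
    intro h
    have h1 := ih (by omega)
    have h2 := nth_lt_nth (show m < m + 1 by omega) h
    show c + (m + 1) ≤ nth S (m + 1)
    omega

lemma nth_zero_eq_one {S : Finset ℕ} (h1 : 1 ∈ S) (hS : ∀ x ∈ S, 1 ≤ x) :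
    nth S 0 = 1 := by
  obtain ⟨i, hi, hix⟩ := exists_nth h1
  rcases Nat.eq_zero_or_pos i with rfl | hpos
  · exact hix
  · have := nth_lt_nth hpos hi
    have := hS _ (nth_mem (show 0 < S.card by omega))
    omega

lemma nth_one_le {S : Finset ℕ} {x : ℕ} (h1 : 1 ∈ S) (hx : x ∈ S) (hx1 : 1 < x)
    (hS : ∀ y ∈ S, 1 ≤ y) : nth S 1 ≤ x := by
  obtain ⟨i, hi, hix⟩ := exists_nth hx
  rcases Nat.eq_zero_or_pos i with rfl | hpos
  · rw [nth_zero_eq_one h1 hS] at hix; omega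
  · calc nth S 1 ≤ nth S i := nth_le_nth hpos hi
    _ = x := hix

lemma nth_eq_of_Icc_subset {S : Finset ℕ} {b : ℕ} (hsub : Finset.Icc 2 b ⊆ S)
    (h1 : 1 ∉ S) (hS : ∀ x ∈ S, 1 ≤ x) (hcard : b - 1 ≤ S.card) :
    ∀ j < b - 1, nth S j = j + 2 := by
  intro j
  induction j using Nat.strong_induction_on with
  | _ j ih =>
    intro hj
    have hge : ∀ x ∈ S, 2 ≤ x := by
      intro x hx
      have hx1 := hS x hx
      have hxne : x ≠ 1 := fun h => h1 (h ▸ hx)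
      omega
    have hlow : j + 2 ≤ nth S j := by have := nth_ge hge j (by omega); omega
    by_contra hne
    have hmem : j + 2 ∈ S := hsub (by simp [Finset.mem_Icc]; omega)
    obtain ⟨i, hi, hix⟩ := exists_nth hmem
    rcases Nat.lt_trichotomy i j with h | rfl | h
    · have := ih i h (by omega); omega
    · omega
    · have := nth_lt_nth h hi; omega

/-- For X ⊆ [2,b] with |X| = d ≥ 1, |A(X)| = |S(X)| + C(n-b, k-b+1), where
A = F([2,b]) ∪ F(1,b) and S is the star family. -/
theorem stmt_18 (n k b d : ℕ) (hn : 2 * k ≤ n) (hk : 2 ≤ k)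
    (hb : 4 ≤ b) (hbk : b ≤ k + 1)
    (X : Finset ℕ) (hX : X ⊆ Finset.Icc 2 b) (hXd : X.card = d) (hd : 1 ≤ d) :
    ((Finset.Icc 1 n).powerset.filter
      (fun S => S.card = k ∧
        ((∀ j < b - 1, nth S j ≤ j + 2) ∨ (nth S 0 = 1 ∧ nth S 1 ≤ b)) ∧
        (S ∩ X).Nonempty)).card
    = ((Finset.Icc 1 n).powerset.filter
        (fun S => S.card = k ∧ 1 ∈ S ∧ (S ∩ X).Nonempty)).card
      + Nat.choose (n - b) (k + 1 - b) := by
  have hXne : X.Nonempty := Finset.card_pos.1 (by omega)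
  have key : (Finset.Icc 1 n).powerset.filter
      (fun S => S.card = k ∧
        ((∀ j < b - 1, nth S j ≤ j + 2) ∨ (nth S 0 = 1 ∧ nth S 1 ≤ b)) ∧
        (S ∩ X).Nonempty)
      = (Finset.Icc 1 n).powerset.filter
          (fun S => S.card = k ∧ 1 ∈ S ∧ (S ∩ X).Nonempty)
        ∪ (Finset.Icc 1 n).powerset.filter
          (fun S => S.card = k ∧ Finset.Icc 2 b ⊆ S ∧ 1 ∉ S) := by
    ext S
    simp only [Finset.mem_filter, Finset.mem_union, Finset.mem_powerset]
    constructor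
    · rintro ⟨hU, hkc, hPQ, hmeet⟩
      have hS1 : ∀ x ∈ S, 1 ≤ x := fun x hx => (Finset.mem_Icc.1 (hU hx)).1
      by_cases h1 : 1 ∈ S
      · exact Or.inl ⟨hU, hkc, h1, hmeet⟩
      · refine Or.inr ⟨hU, hkc, ?_, h1⟩
        have hP : ∀ j < b - 1, nth S j ≤ j + 2 := by
          rcases hPQ with hP | hQ
          · exact hP
          · exfalso
            have : nth S 0 ∈ S := nth_mem (by omega)
            rw [hQ.1] at this
            exact h1 this
        have hge : ∀ x ∈ S, 2 ≤ x := by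
          intro x hx
          have := hS1 x hx
          have hxne : x ≠ 1 := fun h => h1 (h ▸ hx)
          omega
        intro m hm
        rw [Finset.mem_Icc] at hm
        have hj : m - 2 < b - 1 := by omega
        have hjc : m - 2 < S.card := by omega
        have h1' := hP (m - 2) hj
        have h2' := nth_ge hge (m - 2) hjc
        have : nth S (m - 2) = m := by omega
        rw [← this]
        exact nth_mem hjc
    · rintro (⟨hU, hkc, h1, hmeet⟩ | ⟨hU, hkc, hsub, h1⟩)
      · have hS1 : ∀ x ∈ S, 1 ≤ x := fun x hx => (Finset.mem_Icc.1 (hU hx)).1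
        refine ⟨hU, hkc, Or.inr ⟨nth_zero_eq_one h1 hS1, ?_⟩, hmeet⟩
        obtain ⟨x, hx⟩ := hmeet
        rw [Finset.mem_inter] at hx
        have hxb := Finset.mem_Icc.1 (hX hx.2)
        exact le_trans (nth_one_le h1 hx.1 (by omega) hS1) hxb.2
      · have hS1 : ∀ x ∈ S, 1 ≤ x := fun x hx => (Finset.mem_Icc.1 (hU hx)).1
        refine ⟨hU, hkc, Or.inl ?_, ?_⟩
        · intro j hj
          rw [nth_eq_of_Icc_subset hsub h1 hS1 (by omega) j hj]
        · obtain ⟨x, hx⟩ := hXne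
          exact ⟨x, Finset.mem_inter.2 ⟨hsub (hX hx), hx⟩⟩
  have hC : ((Finset.Icc 1 n).powerset.filter
      (fun S => S.card = k ∧ Finset.Icc 2 b ⊆ S ∧ 1 ∉ S)).card
      = Nat.choose (n - b) (k + 1 - b) := by
    have hIcard : (Finset.Icc 2 b).card = b - 1 := by rw [Nat.card_Icc]; omega
    rw [show Nat.choose (n - b) (k + 1 - b)
        = (Finset.powersetCard (k + 1 - b) (Finset.Icc (b + 1) n)).card by
      rw [Finset.card_powersetCard, Nat.card_Icc]; congr 1; omega]
    apply Finset.card_bij' (fun S _ => S \ Finset.Icc 2 b)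
      (fun T _ => T ∪ Finset.Icc 2 b)
    · intro S hS
      simp only [Finset.mem_filter, Finset.mem_powerset] at hS
      obtain ⟨hU, hkc, hsub, h1⟩ := hS
      rw [Finset.mem_powersetCard]
      constructor
      · intro x hx
        rw [Finset.mem_sdiff] at hx
        have hxU := Finset.mem_Icc.1 (hU hx.1)
        have hx1 : x ≠ 1 := fun h => h1 (h ▸ hx.1)
        have : x ∉ Finset.Icc 2 b := hx.2
        rw [Finset.mem_Icc] at this
        rw [Finset.mem_Icc]
        omega
      · rw [Finset.card_sdiff_of_subset hsub, hIcard, hkc]; omega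
    · intro T hT
      rw [Finset.mem_powersetCard] at hT
      obtain ⟨hTs, hTc⟩ := hT
      have hdisj : Disjoint T (Finset.Icc 2 b) := by
        rw [Finset.disjoint_left]
        intro x hx hx'
        have := Finset.mem_Icc.1 (hTs hx)
        rw [Finset.mem_Icc] at hx'
        omega
      simp only [Finset.mem_filter, Finset.mem_powerset]
      refine ⟨?_, ?_, ?_, ?_⟩
      · intro x hx
        rw [Finset.mem_union] at hx
        rw [Finset.mem_Icc]
        rcases hx with hx | hx
        · have := Finset.mem_Icc.1 (hTs hx); omega
        · have := Finset.mem_Icc.1 hx; omega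
      · rw [Finset.card_union_of_disjoint hdisj, hTc, hIcard]; omega
      · exact Finset.subset_union_right
      · rw [Finset.mem_union]
        rintro (h | h)
        · have := Finset.mem_Icc.1 (hTs h); omega
        · have := Finset.mem_Icc.1 h; omega
    · intro S hS
      simp only [Finset.mem_filter, Finset.mem_powerset] at hS
      exact Finset.sdiff_union_of_subset hS.2.2.1
    · intro T hT
      rw [Finset.mem_powersetCard] at hT
      have hdisj : Disjoint T (Finset.Icc 2 b) := by
        rw [Finset.disjoint_left]
        intro x hx hx'
        have := Finset.mem_Icc.1 (hT.1 hx)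
        rw [Finset.mem_Icc] at hx'
        omega
      exact Finset.union_sdiff_cancel_right hdisj
  have hdisjBC : Disjoint
      ((Finset.Icc 1 n).powerset.filter (fun S => S.card = k ∧ 1 ∈ S ∧ (S ∩ X).Nonempty))
      ((Finset.Icc 1 n).powerset.filter (fun S => S.card = k ∧ Finset.Icc 2 b ⊆ S ∧ 1 ∉ S)) := by
    rw [Finset.disjoint_left]
    intro S hS hS'
    simp only [Finset.mem_filter] at hS hS'
    exact hS'.2.2.2 hS.2.2.1
  rw [key, Finset.card_union_of_disjoint hdisjBC, hC]
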